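/- Assume the stacked (m+q)×n matrix [F_k; H_k] has rank n for every k = 0,…,N+1. Then the functional J_{N+1}({x_k}_{k=0}^{N+1}) = Σ_{k=0}^{N+1} [ (Q_{k−1}(F_k x_k − C_{k−1} x_{k−1}), F_k x_k − C_{k−1} x_{k−1}) + (R_k(y_k − H_k x_k), y_k − H_k x_k) ], where by convention C_{−1} = 0 and x_{−1} = 0, has a unique minimizer over (ℝ^n)^{N+2}. -/

import Mathlib

open Matrix




/-- The functional `J_{N+1}({x_k}) = Σ_{k=0}^{N+1} ‖F_k x_k - C_{k-1} x_{k-1}‖²_{Q_{k-1}}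
+ ‖y_k - H_k x_k‖²_{R_k}` with the convention `C_{-1} = 0`, `x_{-1} = 0`.
Index shift: `Q j` stands for `Q_{j-1}`. -/
def Jsmooth {N m n q : ℕ} (F : Fin (N + 2) → Matrix (Fin m) (Fin n) ℝ)
    (C : Fin (N + 1) → Matrix (Fin m) (Fin n) ℝ)
    (H : Fin (N + 2) → Matrix (Fin q) (Fin n) ℝ)
    (Q : Fin (N + 2) → Matrix (Fin m) (Fin m) ℝ)
    (R : Fin (N + 2) → Matrix (Fin q) (Fin q) ℝ)
    (y : Fin (N + 2) → Fin q → ℝ)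
    (x : Fin (N + 2) → Fin n → ℝ) : ℝ :=
  ((Q 0 *ᵥ (F 0 *ᵥ x 0)) ⬝ᵥ (F 0 *ᵥ x 0) +
      (R 0 *ᵥ (y 0 - H 0 *ᵥ x 0)) ⬝ᵥ (y 0 - H 0 *ᵥ x 0)) +
    ∑ k : Fin (N + 1),
      ((Q k.succ *ᵥ (F k.succ *ᵥ x k.succ - C k *ᵥ x k.castSucc)) ⬝ᵥ
          (F k.succ *ᵥ x k.succ - C k *ᵥ x k.castSucc) +
        (R k.succ *ᵥ (y k.succ - H k.succ *ᵥ x k.succ)) ⬝ᵥ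
          (y k.succ - H k.succ *ᵥ x k.succ))


section Aux

lemma aux_mulVec_eq_zero {ι : Type*} [Fintype ι] {n : ℕ} (A : Matrix ι (Fin n) ℝ)
    (h : A.rank = n) {v : Fin n → ℝ} (hv : A *ᵥ v = 0) : v = 0 := by
  have h1 := A.mulVecLin.finrank_range_add_finrank_ker
  rw [Matrix.rank] at h
  have hd : Module.finrank ℝ (Fin n → ℝ) = n := by simp
  rw [h, hd] at h1
  have hker : Module.finrank ℝ (LinearMap.ker A.mulVecLin) = 0 := by omega
  have := Submodule.finrank_eq_zero.mp hker
  have hv' : v ∈ LinearMap.ker A.mulVecLin := by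
    simpa [Matrix.mulVecLin_apply] using hv
  rw [this] at hv'
  simpa using hv'

lemma aux_qf_nonneg {p : ℕ} {M : Matrix (Fin p) (Fin p) ℝ} (hM : M.PosDef)
    (v : Fin p → ℝ) : 0 ≤ (M *ᵥ v) ⬝ᵥ v := by
  have := hM.posSemidef.dotProduct_mulVec_nonneg v
  simpa [dotProduct_comm] using this

lemma aux_qf_eq_zero {p : ℕ} {M : Matrix (Fin p) (Fin p) ℝ} (hM : M.PosDef)
    {v : Fin p → ℝ} (h : (M *ᵥ v) ⬝ᵥ v = 0) : v = 0 := by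
  by_contra hv
  have := hM.dotProduct_mulVec_pos hv
  rw [show star v = v from rfl, dotProduct_comm] at this
  rw [h] at this
  exact lt_irrefl 0 this

lemma aux_qf_symm {p : ℕ} {M : Matrix (Fin p) (Fin p) ℝ} (hM : M.IsHermitian)
    (v w : Fin p → ℝ) : (M *ᵥ v) ⬝ᵥ w = (M *ᵥ w) ⬝ᵥ v := by
  have hMt : Mᵀ = M := by
    have := hM.eq
    rwa [Matrix.conjTranspose_eq_transpose_of_trivial] at this
  rw [dotProduct_comm, Matrix.dotProduct_mulVec, ← Matrix.mulVec_transpose, hMt]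

lemma aux_qf_expand {p : ℕ} {M : Matrix (Fin p) (Fin p) ℝ} (hM : M.IsHermitian)
    (a b : Fin p → ℝ) :
    (M *ᵥ (a - b)) ⬝ᵥ (a - b)
      = (M *ᵥ a) ⬝ᵥ a - 2 * ((M *ᵥ a) ⬝ᵥ b) + (M *ᵥ b) ⬝ᵥ b := by
  rw [Matrix.mulVec_sub, sub_dotProduct, dotProduct_sub, dotProduct_sub,
    aux_qf_symm hM b a]
  ring

variable {N m n q : ℕ} (F : Fin (N + 2) → Matrix (Fin m) (Fin n) ℝ)
    (C : Fin (N + 1) → Matrix (Fin m) (Fin n) ℝ)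
    (H : Fin (N + 2) → Matrix (Fin q) (Fin n) ℝ)
    (Q : Fin (N + 2) → Matrix (Fin m) (Fin m) ℝ)
    (R : Fin (N + 2) → Matrix (Fin q) (Fin q) ℝ)
    (y : Fin (N + 2) → Fin q → ℝ)

/-- The quadratic part of `Jsmooth`, as a two-argument function. -/
def bfun (x z : Fin (N + 2) → Fin n → ℝ) : ℝ :=
  ((Q 0 *ᵥ (F 0 *ᵥ x 0)) ⬝ᵥ (F 0 *ᵥ z 0) +
      (R 0 *ᵥ (H 0 *ᵥ x 0)) ⬝ᵥ (H 0 *ᵥ z 0)) +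
    ∑ k : Fin (N + 1),
      ((Q k.succ *ᵥ (F k.succ *ᵥ x k.succ - C k *ᵥ x k.castSucc)) ⬝ᵥ
          (F k.succ *ᵥ z k.succ - C k *ᵥ z k.castSucc) +
        (R k.succ *ᵥ (H k.succ *ᵥ x k.succ)) ⬝ᵥ (H k.succ *ᵥ z k.succ))

/-- The linear part of `Jsmooth`. -/
def lfun (x : Fin (N + 2) → Fin n → ℝ) : ℝ :=
  (R 0 *ᵥ y 0) ⬝ᵥ (H 0 *ᵥ x 0) +
    ∑ k : Fin (N + 1), (R k.succ *ᵥ y k.succ) ⬝ᵥ (H k.succ *ᵥ x k.succ)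

/-- The constant part of `Jsmooth`. -/
def cfun : ℝ :=
  (R 0 *ᵥ y 0) ⬝ᵥ y 0 + ∑ k : Fin (N + 1), (R k.succ *ᵥ y k.succ) ⬝ᵥ y k.succ

lemma jsmooth_expand (hR : ∀ k, (R k).PosDef) (x : Fin (N + 2) → Fin n → ℝ) :
    Jsmooth F C H Q R y x = bfun F C H Q R x x - 2 * lfun H R y x + cfun R y := by
  have hs : ∀ k : Fin (N + 1),
      (R k.succ *ᵥ (y k.succ - H k.succ *ᵥ x k.succ)) ⬝ᵥ
          (y k.succ - H k.succ *ᵥ x k.succ)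
        = (R k.succ *ᵥ y k.succ) ⬝ᵥ y k.succ
            - 2 * ((R k.succ *ᵥ y k.succ) ⬝ᵥ (H k.succ *ᵥ x k.succ))
            + (R k.succ *ᵥ (H k.succ *ᵥ x k.succ)) ⬝ᵥ (H k.succ *ᵥ x k.succ) :=
    fun k => aux_qf_expand (hR k.succ).1 _ _
  simp only [Jsmooth, bfun, lfun, cfun, aux_qf_expand (hR 0).1, hs,
    Finset.sum_add_distrib, Finset.sum_sub_distrib, ← Finset.mul_sum]
  ring

/-- The quadratic part as a bilinear form. -/
noncomputable def bform : LinearMap.BilinForm ℝ (Fin (N + 2) → Fin n → ℝ) :=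
  LinearMap.mk₂ ℝ (bfun F C H Q R)
    (by
      intro x x' z
      simp only [bfun, Pi.add_apply, Matrix.mulVec_add, add_sub_add_comm,
        add_dotProduct, Finset.sum_add_distrib]
      ring)
    (by
      intro c x z
      simp only [bfun, Pi.smul_apply, Matrix.mulVec_smul, ← smul_sub,
        smul_dotProduct, smul_eq_mul, mul_add, Finset.mul_sum])
    (by
      intro x z z'
      simp only [bfun, Pi.add_apply, Matrix.mulVec_add, add_sub_add_comm,
        dotProduct_add, Finset.sum_add_distrib]
      ring)
    (by
      intro c x z
      simp only [bfun, Pi.smul_apply, Matrix.mulVec_smul, ← smul_sub,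
        dotProduct_smul, smul_eq_mul, mul_add, Finset.mul_sum])

@[simp] lemma bform_apply (x z : Fin (N + 2) → Fin n → ℝ) :
    bform F C H Q R x z = bfun F C H Q R x z := rfl

/-- The linear part as a linear functional. -/
noncomputable def lform : Module.Dual ℝ (Fin (N + 2) → Fin n → ℝ) where
  toFun := lfun H R y
  map_add' := by
    intro x x'
    simp only [lfun, Pi.add_apply, Matrix.mulVec_add, dotProduct_add,
      Finset.sum_add_distrib]
    ring
  map_smul' := by
    intro c x
    simp only [lfun, Pi.smul_apply, Matrix.mulVec_smul, dotProduct_smul,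
      smul_eq_mul, RingHom.id_apply, mul_add, Finset.mul_sum]

lemma bfun_symm (hQ : ∀ j, (Q j).PosDef) (hR : ∀ k, (R k).PosDef)
    (x z : Fin (N + 2) → Fin n → ℝ) :
    bfun F C H Q R x z = bfun F C H Q R z x := by
  simp only [bfun]
  rw [aux_qf_symm (hQ 0).1, aux_qf_symm (hR 0).1]
  congr 1
  refine Finset.sum_congr rfl fun k _ => ?_
  rw [aux_qf_symm (hQ k.succ).1, aux_qf_symm (hR k.succ).1]

lemma bfun_self_nonneg (hQ : ∀ j, (Q j).PosDef) (hR : ∀ k, (R k).PosDef)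
    (x : Fin (N + 2) → Fin n → ℝ) : 0 ≤ bfun F C H Q R x x := by
  refine add_nonneg (add_nonneg (aux_qf_nonneg (hQ 0) _) (aux_qf_nonneg (hR 0) _)) ?_
  exact Finset.sum_nonneg fun k _ =>
    add_nonneg (aux_qf_nonneg (hQ k.succ) _) (aux_qf_nonneg (hR k.succ) _)

lemma bfun_self_eq_zero (hQ : ∀ j, (Q j).PosDef) (hR : ∀ k, (R k).PosDef)
    (hrank : ∀ k : Fin (N + 2), (Matrix.fromRows (F k) (H k)).rank = n)
    {x : Fin (N + 2) → Fin n → ℝ} (h : bfun F C H Q R x x = 0) : x = 0 := by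
  have hinj : ∀ (j : Fin (N + 2)) (v : Fin n → ℝ),
      F j *ᵥ v = 0 → H j *ᵥ v = 0 → v = 0 := by
    intro j v h1 h2
    refine aux_mulVec_eq_zero _ (hrank j) ?_
    rw [Matrix.fromRows_mulVec, h1, h2]
    ext i
    cases i <;> rfl
  set a := (Q 0 *ᵥ (F 0 *ᵥ x 0)) ⬝ᵥ (F 0 *ᵥ x 0) with ha
  set b := (R 0 *ᵥ (H 0 *ᵥ x 0)) ⬝ᵥ (H 0 *ᵥ x 0) with hb
  have hterm : ∀ k : Fin (N + 1),
      0 ≤ (Q k.succ *ᵥ (F k.succ *ᵥ x k.succ - C k *ᵥ x k.castSucc)) ⬝ᵥ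
            (F k.succ *ᵥ x k.succ - C k *ᵥ x k.castSucc) +
          (R k.succ *ᵥ (H k.succ *ᵥ x k.succ)) ⬝ᵥ (H k.succ *ᵥ x k.succ) :=
    fun k => add_nonneg (aux_qf_nonneg (hQ k.succ) _) (aux_qf_nonneg (hR k.succ) _)
  have hsumnn : 0 ≤ ∑ k : Fin (N + 1),
      ((Q k.succ *ᵥ (F k.succ *ᵥ x k.succ - C k *ᵥ x k.castSucc)) ⬝ᵥ
            (F k.succ *ᵥ x k.succ - C k *ᵥ x k.castSucc) +
          (R k.succ *ᵥ (H k.succ *ᵥ x k.succ)) ⬝ᵥ (H k.succ *ᵥ x k.succ)) :=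
    Finset.sum_nonneg fun k _ => hterm k
  have ha' : 0 ≤ a := aux_qf_nonneg (hQ 0) _
  have hb' : 0 ≤ b := aux_qf_nonneg (hR 0) _
  rw [bfun] at h
  have ha0 : a = 0 := by linarith
  have hb0 : b = 0 := by linarith
  have hsum0 : ∑ k : Fin (N + 1),
      ((Q k.succ *ᵥ (F k.succ *ᵥ x k.succ - C k *ᵥ x k.castSucc)) ⬝ᵥ
            (F k.succ *ᵥ x k.succ - C k *ᵥ x k.castSucc) +
          (R k.succ *ᵥ (H k.succ *ᵥ x k.succ)) ⬝ᵥ (H k.succ *ᵥ x k.succ)) = 0 := by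
    linarith
  have hk0 : ∀ k : Fin (N + 1),
      (Q k.succ *ᵥ (F k.succ *ᵥ x k.succ - C k *ᵥ x k.castSucc)) ⬝ᵥ
            (F k.succ *ᵥ x k.succ - C k *ᵥ x k.castSucc) +
          (R k.succ *ᵥ (H k.succ *ᵥ x k.succ)) ⬝ᵥ (H k.succ *ᵥ x k.succ) = 0 := by
    intro k
    exact (Finset.sum_eq_zero_iff_of_nonneg fun k _ => hterm k).mp hsum0 k
      (Finset.mem_univ k)
  have hF0 : F 0 *ᵥ x 0 = 0 := aux_qf_eq_zero (hQ 0) ha0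
  have hH0 : H 0 *ᵥ x 0 = 0 := aux_qf_eq_zero (hR 0) hb0
  have hQk : ∀ k : Fin (N + 1),
      F k.succ *ᵥ x k.succ - C k *ᵥ x k.castSucc = 0 := by
    intro k
    have h1 := aux_qf_nonneg (hQ k.succ)
      (F k.succ *ᵥ x k.succ - C k *ᵥ x k.castSucc)
    have h2 := aux_qf_nonneg (hR k.succ) (H k.succ *ᵥ x k.succ)
    have := hk0 k
    exact aux_qf_eq_zero (hQ k.succ) (by linarith)
  have hHk : ∀ k : Fin (N + 1), H k.succ *ᵥ x k.succ = 0 := by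
    intro k
    have h1 := aux_qf_nonneg (hQ k.succ)
      (F k.succ *ᵥ x k.succ - C k *ᵥ x k.castSucc)
    have h2 := aux_qf_nonneg (hR k.succ) (H k.succ *ᵥ x k.succ)
    have := hk0 k
    exact aux_qf_eq_zero (hR k.succ) (by linarith)
  have hall : ∀ j : Fin (N + 2), x j = 0 := by
    intro j
    induction j using Fin.induction with
    | zero => exact hinj 0 _ hF0 hH0
    | succ k ih =>
      have h := hQk k
      rw [ih, Matrix.mulVec_zero, sub_zero] at h
      exact hinj k.succ _ h (hHk k)
  funext j
  rw [hall j]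
  rfl

end Aux
/-- if `rank [F_k; H_k] = n` for every k = 0,…,N+1, then the
functional `J_{N+1}` has a unique minimizer over `(ℝⁿ)^{N+2}`. -/
theorem stmt17 {N m n q : ℕ}
    (F : Fin (N + 2) → Matrix (Fin m) (Fin n) ℝ)
    (C : Fin (N + 1) → Matrix (Fin m) (Fin n) ℝ)
    (H : Fin (N + 2) → Matrix (Fin q) (Fin n) ℝ)
    (Q : Fin (N + 2) → Matrix (Fin m) (Fin m) ℝ)
    (R : Fin (N + 2) → Matrix (Fin q) (Fin q) ℝ)
    (y : Fin (N + 2) → Fin q → ℝ)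
    (hQ : ∀ j, (Q j).PosDef) (hR : ∀ k, (R k).PosDef)
    (hrank : ∀ k : Fin (N + 2), (Matrix.fromRows (F k) (H k)).rank = n) :
    ∃! xh : Fin (N + 2) → Fin n → ℝ,
      ∀ x : Fin (N + 2) → Fin n → ℝ, Jsmooth F C H Q R y xh ≤ Jsmooth F C H Q R y x := by
  classical
  have hnn : ∀ x, 0 ≤ bform F C H Q R x x := fun x =>
    bfun_self_nonneg F C H Q R hQ hR x
  have hzero : ∀ x, bform F C H Q R x x = 0 → x = 0 := fun x h =>
    bfun_self_eq_zero F C H Q R hQ hR hrank h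
  have hnd : (bform F C H Q R).Nondegenerate :=
    ⟨fun x hx => hzero x (hx x), fun x hx => hzero x (hx x)⟩
  set xs := ((bform F C H Q R).toDual hnd).symm (lform H R y) with hxs
  have hx' : ∀ z, bform F C H Q R xs z = lform H R y z := fun z =>
    LinearMap.BilinForm.apply_toDual_symm_apply _ _
  have key : ∀ x, Jsmooth F C H Q R y x
      = Jsmooth F C H Q R y xs + bform F C H Q R (x - xs) (x - xs) := by
    intro x
    have e1 := jsmooth_expand F C H Q R y hR x
    have e2 := jsmooth_expand F C H Q R y hR xs
    have e3 : bform F C H Q R (x - xs) (x - xs)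
        = bfun F C H Q R x x - 2 * bfun F C H Q R xs x + bfun F C H Q R xs xs := by
      simp only [map_sub, LinearMap.sub_apply, bform_apply]
      rw [bfun_symm F C H Q R hQ hR x xs]
      ring
    have e4 : lfun H R y x = bfun F C H Q R xs x := (hx' x).symm
    have e5 : lfun H R y xs = bfun F C H Q R xs xs := (hx' xs).symm
    rw [e1, e2, e3, e4, e5]
    ring
  refine ⟨xs, fun x => ?_, fun xh hxh => ?_⟩
  · rw [key x]
    have := hnn (x - xs)
    linarith
  · have h2 : Jsmooth F C H Q R y xs ≤ Jsmooth F C H Q R y xh := by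
      rw [key xh]
      have := hnn (xh - xs)
      linarith
    have h1 := hxh xs
    have h3 : bform F C H Q R (xh - xs) (xh - xs) = 0 := by
      have := key xh
      linarith
    exact sub_eq_zero.mp (hzero _ h3)
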